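/- Let X be a complex Banach space, T > 0, c ∈ ℝ, and let g : [0,T] → X be continuously differentiable. If θ : [0,T] → X is continuously differentiable and satisfies the Volterra equation of the second kind θ'(t) + ∫_t^T e^{−ic(s−t)} (θ(s) − i c θ'(s)) ds = g(t) for all t ∈ [0,T], then θ' is continuously differentiable on [0,T], θ''(t) − θ(t) = g'(t) − i c g(t) for all t ∈ [0,T] (equivalently θ''(t) − θ(t) = e^{ict} d/dt( e^{−ict} g(t) )), and θ'(T) = g(T). -/

import Mathlib

open Set Complex MeasureTheory intervalIntegral Topology

lemma ftc_Icc_aux {E : Type*} [NormedAddCommGroup E] [NormedSpace ℝ E] [CompleteSpace E]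
    {f : ℝ → E} {T : ℝ} (hT : 0 < T) (hf : ContinuousOn f (Icc 0 T))
    {t : ℝ} (ht : t ∈ Icc (0 : ℝ) T) :
    HasDerivWithinAt (fun u => ∫ s in u..T, f s) (-f t) (Icc 0 T) t := by
  have hint : IntervalIntegrable f volume t T :=
    (hf.mono (uIcc_subset_Icc ht (right_mem_Icc.2 hT.le))).intervalIntegrable
  haveI : Fact (t ∈ Icc (0 : ℝ) T) := ⟨ht⟩
  exact integral_hasDerivWithinAt_left hint
    (hf.stronglyMeasurableAtFilter_nhdsWithin measurableSet_Icc t)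
    (hf.continuousWithinAt ht)

/-- If a continuously differentiable `θ : [0,T] → X` satisfies the Volterra equation of
the second kind `θ'(t) + ∫_t^T e^{-ic(s-t)} (θ(s) - i c θ'(s)) ds = g(t)` with `g`
continuously differentiable, then `θ'` is continuously differentiable,
`θ'' - θ = g' - i c g` on `[0,T]`, and `θ'(T) = g(T)`. -/
theorem volterra_implies_ode
    {X : Type*} [NormedAddCommGroup X] [NormedSpace ℂ X] [CompleteSpace X]
    (T : ℝ) (hT : 0 < T) (c : ℝ) (g g' θ θ' : ℝ → X)
    (hg : ∀ t ∈ Icc (0 : ℝ) T, HasDerivWithinAt g (g' t) (Icc 0 T) t)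
    (hg' : ContinuousOn g' (Icc 0 T))
    (hθ : ∀ t ∈ Icc (0 : ℝ) T, HasDerivWithinAt θ (θ' t) (Icc 0 T) t)
    (hθ' : ContinuousOn θ' (Icc 0 T))
    (hvolt : ∀ t ∈ Icc (0 : ℝ) T,
      θ' t + ∫ s in t..T,
        Complex.exp (-(Complex.I * (c : ℂ) * ((s : ℂ) - (t : ℂ)))) •
          (θ s - (Complex.I * (c : ℂ)) • θ' s) = g t) :
    (∃ θ'' : ℝ → X,
      (∀ t ∈ Icc (0 : ℝ) T, HasDerivWithinAt θ' (θ'' t) (Icc 0 T) t) ∧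
      ContinuousOn θ'' (Icc 0 T) ∧
      (∀ t ∈ Icc (0 : ℝ) T, θ'' t - θ t = g' t - (Complex.I * (c : ℂ)) • g t)) ∧
    θ' T = g T := by
  set ic : ℂ := Complex.I * (c : ℂ) with hic
  -- basic continuity facts
  have hθc : ContinuousOn θ (Icc 0 T) := fun t ht => (hθ t ht).continuousWithinAt
  have hgc : ContinuousOn g (Icc 0 T) := fun t ht => (hg t ht).continuousWithinAt
  set w : ℝ → X := fun s => θ s - ic • θ' s with hw
  have hwc : ContinuousOn w (Icc 0 T) := hθc.sub (hθ'.const_smul ic)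
  set f : ℝ → X := fun s => Complex.exp (-(ic * (s : ℂ))) • w s with hf
  have hfc : ContinuousOn f (Icc 0 T) := by
    apply ContinuousOn.smul _ hwc
    exact (Complex.continuous_exp.comp (by continuity)).continuousOn
  set G : ℝ → X := fun t => ∫ s in t..T, f s with hG
  set E : ℝ → ℂ := fun t => Complex.exp (ic * (t : ℂ)) with hE
  -- derivative of E
  have hEder : ∀ t : ℝ, HasDerivAt E (ic * E t) t := by
    intro t
    have h1 : HasDerivAt (fun z : ℂ => Complex.exp (ic * z)) (Complex.exp (ic * t) * ic) (t : ℂ) := by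
      have hinner : HasDerivAt (fun z : ℂ => ic * z) ic (t : ℂ) := by
        simpa using (hasDerivAt_id (t : ℂ)).const_mul ic
      exact (Complex.hasDerivAt_exp (ic * (t : ℂ))).comp (t : ℂ) hinner
    have := h1.comp_ofReal
    simpa [hE, mul_comm] using this
  -- rewrite the Volterra integral
  have hEf : ∀ t ∈ Icc (0:ℝ) T, E t • G t = g t - θ' t := by
    intro t ht
    have h := hvolt t ht
    have hrw : (∫ s in t..T,
        Complex.exp (-(ic * ((s : ℂ) - (t : ℂ)))) • (θ s - ic • θ' s)) = E t • G t := by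
      rw [hG]
      rw [← intervalIntegral.integral_smul]
      apply intervalIntegral.integral_congr
      intro s hs
      show Complex.exp (-(ic * ((s : ℂ) - (t : ℂ)))) • (θ s - ic • θ' s)
        = Complex.exp (ic * (t : ℂ)) • Complex.exp (-(ic * (s : ℂ))) • w s
      rw [smul_smul, ← Complex.exp_add, hw]
      congr 2
      ring
    rw [hrw] at h
    rw [eq_sub_iff_add_eq]
    rw [← h]; abel
  -- F has derivative
  have hGder : ∀ t ∈ Icc (0:ℝ) T, HasDerivWithinAt G (-f t) (Icc 0 T) t :=
    fun t ht => ftc_Icc_aux hT hfc ht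
  have hFder : ∀ t ∈ Icc (0:ℝ) T,
      HasDerivWithinAt (fun u => E u • G u) (E t • (-f t) + (ic * E t) • G t) (Icc 0 T) t := by
    intro t ht
    exact ((hEder t).hasDerivWithinAt).smul (hGder t ht)
  -- θ' = g - E•G on Icc
  set θ'' : ℝ → X := fun t => g' t - ic • g t + θ t with hθ''
  have key : ∀ t ∈ Icc (0:ℝ) T, HasDerivWithinAt θ' (θ'' t) (Icc 0 T) t := by
    intro t ht
    have hEinv : E t * Complex.exp (-(ic * (t : ℂ))) = 1 := by
      rw [hE, ← Complex.exp_add]; simp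
    have hder : HasDerivWithinAt (fun u => g u - E u • G u)
        (g' t - (E t • (-f t) + (ic * E t) • G t)) (Icc 0 T) t :=
      (hg t ht).sub (hFder t ht)
    have heq : g' t - (E t • (-f t) + (ic * E t) • G t) = θ'' t := by
      rw [hθ'', hf]
      have h1 : E t • (-(Complex.exp (-(ic * (t : ℂ))) • w t)) = -w t := by
        rw [smul_neg, ← smul_assoc, smul_eq_mul, hEinv, one_smul]
      have h2 : (ic * E t) • G t = ic • (g t - θ' t) := by
        rw [mul_smul, hEf t ht]
      rw [h1, h2, hw]
      rw [smul_sub]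
      module
    rw [heq] at hder
    apply hder.congr _ (by rw [eq_sub_iff_add_eq, hEf t ht]; abel)
    intro u hu
    rw [eq_sub_iff_add_eq, hEf u hu]; abel
  have hT' : θ' T = g T := by
    have h := hvolt T (right_mem_Icc.2 hT.le)
    simpa using h
  refine ⟨⟨θ'', key, ?_, ?_⟩, hT'⟩
  · exact (hg'.sub (hgc.const_smul ic)).add hθc
  · intro t ht
    rw [hθ'']
    module
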